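/- In a crystal poset with key map κ satisfying the standard axioms, if distinct elements u and u' are both covered by v and κ(u) = κ(u'), then κ(v) = κ(u). -/

import Mathlib

/-- The left weak Bruhat order on a Coxeter group: `u ≤ v` iff `ℓ(v u⁻¹) + ℓ(u) = ℓ(v)`. -/
noncomputable def lweakLE {B W : Type*} [Group W] {M : CoxeterMatrix B}
    (cs : CoxeterSystem M W) (u v : W) : Prop :=
  cs.length (v * u⁻¹) + cs.length u = cs.length v


open Real

namespace StmtAux

noncomputable def Rm (c : ℝ) : Matrix (Fin 2) (Fin 2) ℝ := !![4*c^2-1, 2*c; -2*c, -1]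

lemma Rm_sq (c : ℝ) : Rm c * Rm c = (4*c^2-2) • Rm c - 1 := by
  ext i j
  fin_cases i <;> fin_cases j <;>
    simp [Rm, Matrix.mul_apply, Fin.sum_univ_two, Matrix.one_apply] <;> ring

end StmtAux

namespace StmtAux

open Real in
lemma Rm_pow_eq_one {m : ℕ} (hm : 2 ≤ m) : Rm (-Real.cos (π / m)) ^ m = 1 := by
  rcases eq_or_lt_of_le hm with h2 | h3
  · -- m = 2
    subst h2
    have : Rm (-Real.cos (π / (2:ℕ))) = Rm 0 := by norm_num [Real.cos_pi_div_two]
    rw [this]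
    ext i j
    fin_cases i <;> fin_cases j <;>
      simp [pow_two, Rm, Matrix.mul_apply, Fin.sum_univ_two, Matrix.one_apply]
  · -- m ≥ 3
    have hm3 : 3 ≤ m := h3
    have hm0 : (m:ℝ) ≠ 0 := by positivity
    set θ : ℝ := π / m with hθ
    set c : ℝ := -Real.cos θ with hc
    have hθpos : 0 < θ := by positivity
    have h2θ : 2*θ < π := by
      rw [hθ, mul_div_assoc']
      rw [div_lt_iff₀ (by positivity : (0:ℝ) < m)]
      have h3m : (3:ℝ) ≤ m := by exact_mod_cast hm3
      nlinarith [Real.pi_pos]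
    have hsin : Real.sin (2*θ) ≠ 0 :=
      ne_of_gt (Real.sin_pos_of_pos_of_lt_pi (by positivity) h2θ)
    have hcos : 4*c^2-2 = 2*Real.cos (2*θ) := by
      rw [hc, Real.cos_two_mul]; ring
    set a : ℕ → ℝ := fun k => Real.sin (2*k*θ)/Real.sin (2*θ) with ha
    have key : ∀ n : ℕ, Rm c ^ (n+1) = a (n+1) • Rm c - a n • 1 := by
      intro n
      induction n with
      | zero =>
        simp only [pow_one, ha]
        push_cast
        rw [show 2*(1:ℝ)*θ = 2*θ by ring, show 2*(0:ℝ)*θ = 0 by ring]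
        rw [div_self hsin, Real.sin_zero]
        simp
      | succ n ih =>
        have hrec : a (n+2) = (4*c^2-2) * a (n+1) - a n := by
          rw [hcos, ha]
          have h1 := Real.sin_add (2*((n:ℝ)+1)*θ) (2*θ)
          have h2 := Real.sin_sub (2*((n:ℝ)+1)*θ) (2*θ)
          have e1 : 2*((n:ℝ)+1)*θ + 2*θ = 2*((n:ℝ)+2)*θ := by ring
          have e2 : 2*((n:ℝ)+1)*θ - 2*θ = 2*(n:ℝ)*θ := by ring
          rw [e1] at h1; rw [e2] at h2
          push_cast
          field_simp
          ring_nf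
          ring_nf at h1 h2
          linarith
        rw [pow_succ, ih, sub_mul, smul_mul_assoc, smul_mul_assoc, Rm_sq, one_mul,
          smul_sub, smul_smul, hrec]
        push_cast
        ext i j
        simp [Matrix.sub_apply, Matrix.smul_apply, smul_eq_mul]
        ring
    have hm1 : m - 1 + 1 = m := by omega
    have hfin := key (m-1)
    rw [hm1] at hfin
    have ham : a m = 0 := by
      simp only [ha]
      have : 2*(m:ℝ)*θ = 2*π := by rw [hθ]; field_simp
      simp [this, Real.sin_two_pi]
    have ham1 : a (m-1) = -1 := by
      simp only [ha]
      have h1m : 1 ≤ m := by omega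
      have hcast : ((m-1 : ℕ) : ℝ) = (m:ℝ) - 1 := by
        push_cast [Nat.cast_sub h1m]; ring
      simp only [hcast]
      have : 2*((m:ℝ)-1)*θ = 2*π - 2*θ := by rw [hθ]; field_simp
      rw [this, show (2:ℝ)*π - 2*θ = -(2*θ) + 2*π by ring,
        Real.sin_add_two_pi, Real.sin_neg]
      field_simp
    rw [hfin, ham, ham1]
    simp

end StmtAux

namespace StmtAux

open Real Finsupp

variable {I : Type*} (M : CoxeterMatrix I)

/-- The bilinear form values of the standard geometric representation. -/
noncomputable def kf (a b : I) : ℝ :=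
  if M a b = 0 then -1 else -Real.cos (π / (M a b : ℝ))

lemma kf_symm (a b : I) : kf M a b = kf M b a := by
  rw [kf, kf, M.symmetric]

lemma kf_diag (a : I) : kf M a a = 1 := by
  simp [kf, M.diagonal a]

/-- Pairing with the simple root `e_a`. -/
noncomputable def Bf (a : I) : (I →₀ ℝ) →ₗ[ℝ] ℝ :=
  Finsupp.linearCombination ℝ (kf M a)

lemma Bf_single (a b : I) (r : ℝ) : Bf M a (Finsupp.single b r) = r * kf M a b := by
  simp [Bf, Finsupp.linearCombination_single, smul_eq_mul]

/-- The geometric reflection associated to `a`. -/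
noncomputable def rfl' (a : I) : Module.End ℝ (I →₀ ℝ) :=
  LinearMap.id - (Finsupp.lsingle a).comp ((2:ℝ) • Bf M a)

lemma rfl'_apply (a : I) (v : I →₀ ℝ) :
    rfl' M a v = v - Finsupp.single a (2 * Bf M a v) := by
  simp [rfl', LinearMap.sub_apply, LinearMap.smul_apply, Finsupp.lsingle_apply,
    smul_eq_mul]

lemma Bf_rfl' (a b : I) (v : I →₀ ℝ) :
    Bf M b (rfl' M a v) = Bf M b v - 2 * Bf M a v * kf M b a := by
  rw [rfl'_apply, map_sub, Bf_single]

lemma rfl'_fix {a : I} {v : I →₀ ℝ} (h : Bf M a v = 0) : rfl' M a v = v := by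
  simp [rfl'_apply, h]

lemma rfl'_sq (a : I) : rfl' M a * rfl' M a = 1 := by
  apply LinearMap.ext; intro v
  have hx : Bf M a (rfl' M a v) = -(Bf M a v) := by
    rw [Bf_rfl', kf_diag]; ring
  rw [Module.End.mul_apply, rfl'_apply M a (rfl' M a v), hx, rfl'_apply,
    show (2 * -(Bf M a v)) = -(2 * Bf M a v) by ring, Finsupp.single_neg,
    sub_neg_eq_add, sub_add_cancel, Module.End.one_apply]

end StmtAux

namespace StmtAux

open Real Finsupp

variable {I : Type*} (M : CoxeterMatrix I)

lemma pair_eq {a b : I} {p p' q q' : ℝ} (hp : p = p') (hq : q = q') :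
    Finsupp.single a p + Finsupp.single b q
      = Finsupp.single a p' + Finsupp.single b q' := by rw [hp, hq]

lemma rfl'_liftable : CoxeterMatrix.IsLiftable M (fun a => rfl' M a) := by
  intro a b
  simp only
  by_cases h0 : M a b = 0
  · rw [h0, pow_zero]
  by_cases hab : a = b
  · subst hab; rw [M.diagonal, pow_one, rfl'_sq]
  have hm2 : 2 ≤ M a b := by
    have h1 := M.off_diagonal a b hab
    omega
  set c : ℝ := kf M a b with hcv
  have hc : c = -Real.cos (π / (M a b : ℝ)) := by rw [hcv, kf, if_neg h0]
  have hmpos : (0:ℝ) < (M a b : ℝ) := by exact_mod_cast Nat.lt_of_lt_of_le Nat.zero_lt_two hm2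
  have hd : (0:ℝ) < 1 - c^2 := by
    have hsin : 0 < Real.sin (π / (M a b : ℝ)) := by
      apply Real.sin_pos_of_pos_of_lt_pi (by positivity)
      rw [div_lt_iff₀ hmpos]
      have h2m : (2:ℝ) ≤ (M a b : ℝ) := by exact_mod_cast hm2
      nlinarith [Real.pi_pos]
    have := Real.sin_sq_add_cos_sq (π / (M a b : ℝ))
    rw [hc]; nlinarith
  have hdne : (1:ℝ) - c^2 ≠ 0 := ne_of_gt hd
  apply LinearMap.ext; intro v
  set x := Bf M a v with hxv
  set y := Bf M b v with hyv
  set α : ℝ := (x - c*y)/(1-c^2) with hα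
  set β : ℝ := (y - c*x)/(1-c^2) with hβ
  set u : I →₀ ℝ := Finsupp.single a α + Finsupp.single b β with hu
  have hBau : Bf M a u = x := by
    rw [hu, map_add, Bf_single, Bf_single, kf_diag, ← hcv, hα, hβ]
    field_simp; ring
  have hBbu : Bf M b u = y := by
    rw [hu, map_add, Bf_single, Bf_single, kf_diag, kf_symm, ← hcv, hα, hβ]
    field_simp; ring
  set w : I →₀ ℝ := v - u with hw
  have hwa : Bf M a w = 0 := by rw [hw, map_sub, hBau, ← hxv, sub_self]
  have hwb : Bf M b w = 0 := by rw [hw, map_sub, hBbu, ← hyv, sub_self]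
  have hfixw : ∀ k : ℕ, ((rfl' M a * rfl' M b)^k) w = w := by
    intro k
    induction k with
    | zero => simp
    | succ k ih =>
      rw [pow_succ, Module.End.mul_apply, Module.End.mul_apply,
        rfl'_fix M hwb, rfl'_fix M hwa, ih]
  have hψa : ∀ p q : ℝ, rfl' M a (Finsupp.single a p + Finsupp.single b q)
      = Finsupp.single a (-p - 2*c*q) + Finsupp.single b q := by
    intro p q
    have hB : Bf M a (Finsupp.single a p + Finsupp.single b q) = p + q * c := by
      rw [map_add, Bf_single, Bf_single, kf_diag, ← hcv]; ring
    rw [rfl'_apply, hB, add_sub_right_comm, ← Finsupp.single_sub]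
    exact pair_eq (by ring) rfl
  have hψb : ∀ p q : ℝ, rfl' M b (Finsupp.single a p + Finsupp.single b q)
      = Finsupp.single a p + Finsupp.single b (-2*c*p - q) := by
    intro p q
    have hB : Bf M b (Finsupp.single a p + Finsupp.single b q) = p * c + q := by
      rw [map_add, Bf_single, Bf_single, kf_diag, kf_symm, ← hcv]; ring
    rw [rfl'_apply, hB, add_sub_assoc, ← Finsupp.single_sub]
    exact pair_eq rfl (by ring)
  have hstep : ∀ z : Fin 2 → ℝ,
      (rfl' M a * rfl' M b) (Finsupp.single a (z 0) + Finsupp.single b (z 1))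
        = Finsupp.single a (((Rm c).mulVec z) 0)
          + Finsupp.single b (((Rm c).mulVec z) 1) := by
    intro z
    have h0' : ((Rm c).mulVec z) 0 = (4*c^2-1)*(z 0) + 2*c*(z 1) := by
      simp [Rm, Matrix.mulVec, dotProduct, Fin.sum_univ_two]
    have h1' : ((Rm c).mulVec z) 1 = -2*c*(z 0) + -1*(z 1) := by
      simp [Rm, Matrix.mulVec, dotProduct, Fin.sum_univ_two]
    rw [Module.End.mul_apply, hψb, hψa, h0', h1']
    exact pair_eq (by ring) (by ring)
  have hiter : ∀ (k : ℕ) (z : Fin 2 → ℝ),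
      ((rfl' M a * rfl' M b)^k) (Finsupp.single a (z 0) + Finsupp.single b (z 1))
        = Finsupp.single a (((Rm c ^ k).mulVec z) 0)
          + Finsupp.single b (((Rm c ^ k).mulVec z) 1) := by
    intro k
    induction k with
    | zero => intro z; simp [Matrix.one_mulVec]
    | succ k ih =>
      intro z
      rw [pow_succ, Module.End.mul_apply, hstep z, ih ((Rm c).mulVec z)]
      rw [Matrix.mulVec_mulVec, ← pow_succ]
  have hRm : Rm c ^ (M a b) = 1 := by rw [hc]; exact Rm_pow_eq_one hm2
  have hU : ((rfl' M a * rfl' M b)^(M a b)) u = u := by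
    have hz : u = Finsupp.single a ((![α, β] : Fin 2 → ℝ) 0)
        + Finsupp.single b ((![α, β] : Fin 2 → ℝ) 1) := by
      rw [hu]; simp
    rw [hz, hiter, hRm, Matrix.one_mulVec]
  have hv : v = u + w := by rw [hw]; abel
  rw [Module.End.one_apply, hv, map_add, hU, hfixw]

end StmtAux

namespace StmtAux

theorem simple_inj {I : Type*} {W : Type*} [Group W] {M : CoxeterMatrix I}
    (cs : CoxeterSystem M W) {i j : I} (h : cs.simple i = cs.simple j) : i = j := by
  by_contra hij
  have hf := rfl'_liftable M
  have h1 := cs.lift_apply_simple hf i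
  have h2 := cs.lift_apply_simple hf j
  have heq : rfl' M i = rfl' M j := by
    rw [← h1, ← h2, h]
  have hL : (rfl' M i (Finsupp.single i 1)) i = -1 := by
    rw [rfl'_apply, Bf_single, kf_diag]
    simp [Finsupp.sub_apply, Finsupp.single_apply]
    norm_num
  have hR : (rfl' M j (Finsupp.single i 1)) i = 1 := by
    rw [rfl'_apply, Bf_single]
    simp [Finsupp.sub_apply, Finsupp.single_apply, Ne.symm hij]
  rw [heq, hR] at hL
  norm_num at hL

end StmtAux

/-- In a crystal poset with a key map `κ` satisfying the standard axioms, if distinct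
elements `u` and `u'` are both covered by `v` and `κ(u) = κ(u')`, then `κ(v) = κ(u)`. -/
theorem stmt_11 {Crys I W : Type*} [Group W] {M : CoxeterMatrix I}
    (cs : CoxeterSystem M W)
    (C : I → Crys → Crys → Prop)
    (hup : ∀ (i : I) (u v v' : Crys), C i u v → C i u v' → v = v')
    (hdown : ∀ (i : I) (u u' v : Crys), C i u v → C i u' v → u = u')
    (κ : Crys → W)
    (h1 : ∀ (i : I) (u v : Crys), C i u v → (∃ u', C i u' u) → κ v = κ u)
    (h2 : ∀ (i : I) (u v : Crys), C i u v → κ v = κ u ∨ κ v = cs.simple i * κ u)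
    (h3 : ∀ (i : I) (u : Crys), ¬(∃ u', C i u' u) →
      cs.length (cs.simple i * κ u) = cs.length (κ u) + 1)
    {u u' v : Crys} {i j : I}
    (hne : u ≠ u') (hcov : C i u v) (hcov' : C j u' v) (hκ : κ u = κ u') :
    κ v = κ u := by
  rcases h2 i u v hcov with h | hi
  · exact h
  rcases h2 j u' v hcov' with h' | hj
  · rw [h', ← hκ]
  · exfalso
    have hss : cs.simple i = cs.simple j := by
      have hmul : cs.simple i * κ u = cs.simple j * κ u := by
        rw [← hi, hj, hκ]
      exact mul_right_cancel hmul
    have hij : i = j := StmtAux.simple_inj cs hss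
    subst hij
    exact hne (hdown i u u' v hcov hcov')
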